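/- Let A, B be d×d integer matrices defining endomorphisms φ(x) = A·x, ψ(x) = B·x of the abelian group ℤ^d. Suppose there exists an invertible complex matrix P such that both P⁻¹AP and P⁻¹BP are upper triangular, with diagonal entries ξ₁, …, ξ_d and η₁, …, η_d respectively (so the eigenvalues of Aⁿ − Bⁿ are ξᵢⁿ − ηᵢⁿ). Then for every n ≥ 1 such that ξᵢⁿ ≠ ηᵢⁿ for all 1 ≤ i ≤ d, the Reidemeister coincidence number satisfies R(φⁿ, ψⁿ) = ∏_{i=1}^{d} |ξᵢⁿ − ηᵢⁿ| (complex absolute values; the product is a positive integer equal to |det(Aⁿ − Bⁿ)|). -/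

import Mathlib

open Matrix

lemma aux_tri_pow {d : ℕ} (T : Matrix (Fin d) (Fin d) ℂ)
    (hT : T.BlockTriangular (id : Fin d → Fin d)) (n : ℕ) :
    (T ^ n).BlockTriangular (id : Fin d → Fin d) ∧ ∀ i, (T ^ n) i i = T i i ^ n := by
  induction n with
  | zero => simp [pow_zero, Matrix.blockTriangular_one, Matrix.one_apply_eq]
  | succ n ih =>
    refine ⟨?_, ?_⟩
    · rw [pow_succ]; exact ih.1.mul hT
    · intro i
      rw [pow_succ, Matrix.mul_apply]
      rw [Finset.sum_eq_single i]
      · rw [ih.2 i, pow_succ]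
      · intro j _ hj
        rcases lt_or_gt_of_ne hj with h | h
        · rw [ih.1 (show (id j : Fin d) < id i from h), zero_mul]
        · rw [hT (show (id i : Fin d) < id j from h), mul_zero]
      · simp

lemma aux_conj_pow {d : ℕ} (P X : Matrix (Fin d) (Fin d) ℂ) (hP : IsUnit P) (n : ℕ) :
    (P⁻¹ * X * P) ^ n = P⁻¹ * X ^ n * P := by
  have hd : IsUnit P.det := (Matrix.isUnit_iff_isUnit_det P).mp hP
  induction n with
  | zero => simp [Matrix.nonsing_inv_mul P hd]
  | succ n ih =>
    rw [pow_succ, ih, pow_succ]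
    have h1 : P * P⁻¹ = 1 := Matrix.mul_nonsing_inv P hd
    calc P⁻¹ * X ^ n * P * (P⁻¹ * X * P)
        = P⁻¹ * X ^ n * (P * P⁻¹) * (X * P) := by simp only [Matrix.mul_assoc]
      _ = P⁻¹ * (X ^ n * X) * P := by rw [h1]; simp only [Matrix.mul_one, Matrix.mul_assoc]

lemma aux_card_cokernel {d : ℕ} (M : Matrix (Fin d) (Fin d) ℤ) (hM : M.det ≠ 0) :
    (LinearMap.range (Matrix.toLin' M)).toAddSubgroup.index = M.det.natAbs := by
  classical
  have hinj : Function.Injective (Matrix.toLin' M) := by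
    rw [← LinearMap.ker_eq_bot, Matrix.ker_toLin'_eq_bot_iff]
    intro v hv
    have h1 : M.adjugate.mulVec (M.mulVec v) = M.det • v := by
      rw [Matrix.mulVec_mulVec, Matrix.adjugate_mul, Matrix.smul_mulVec,
        Matrix.one_mulVec]
    rw [hv, Matrix.mulVec_zero] at h1
    funext i
    have := congrFun h1 i
    simp only [Pi.zero_apply, Pi.smul_apply, smul_eq_mul] at this
    exact (mul_eq_zero.mp this.symm).resolve_left hM
  set N := LinearMap.range (Matrix.toLin' M) with hN
  obtain ⟨n, snf⟩ := Submodule.smithNormalForm (Pi.basisFun ℤ (Fin d)) N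
  let e1 : (Fin d → ℤ) ≃ₗ[ℤ] N := LinearEquiv.ofInjective (Matrix.toLin' M) hinj
  have hnd : n = d := by
    have h1 : Module.finrank ℤ N = n := Module.finrank_eq_card_basis snf.bN |>.trans (by simp)
    have h2 : Module.finrank ℤ N = d := by
      rw [← e1.finrank_eq]; simp
    omega
  subst hnd
  have hfbij : Function.Bijective snf.f :=
    (Finite.injective_iff_bijective).mp snf.f.injective
  let σ : Fin n ≃ Fin n := Equiv.ofBijective snf.f hfbij
  -- index computation
  have hidx : N.toAddSubgroup.index = ∏ i, (snf.a i).natAbs := by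
    rw [snf.toAddSubgroup_index_eq_pow_mul_prod]
    simp [Ideal.span_singleton_toAddSubgroup_eq_zmultiples, Int.index_zmultiples]
  -- determinant computation
  let e2 : (Fin n → ℤ) ≃ₗ[ℤ] N := snf.bM.equiv snf.bN σ.symm
  have hdet1 : LinearMap.det ((N.subtype : N →ₗ[ℤ] (Fin n → ℤ)) ∘ₗ (e1 : (Fin n → ℤ) →ₗ[ℤ] N))
      = M.det := by
    have : (N.subtype : N →ₗ[ℤ] (Fin n → ℤ)) ∘ₗ (e1 : (Fin n → ℤ) →ₗ[ℤ] N)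
        = Matrix.toLin' M := LinearMap.ext fun v => rfl
    rw [this, LinearMap.det_toLin']
  have hdet2 : LinearMap.det ((N.subtype : N →ₗ[ℤ] (Fin n → ℤ)) ∘ₗ (e2 : (Fin n → ℤ) →ₗ[ℤ] N))
      = ∏ i, snf.a i := by
    set g := (N.subtype : N →ₗ[ℤ] (Fin n → ℤ)) ∘ₗ (e2 : (Fin n → ℤ) →ₗ[ℤ] N) with hg
    have hgb : ∀ i, g (snf.bM i) = snf.a (σ.symm i) • snf.bM i := by
      intro i
      have h1 : e2 (snf.bM i) = snf.bN (σ.symm i) := snf.bM.equiv_apply _ _ _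
      have h2 : (snf.bN (σ.symm i) : Fin n → ℤ) = snf.a (σ.symm i) • snf.bM (snf.f (σ.symm i)) :=
        snf.snf _
      have h3 : snf.f (σ.symm i) = i := σ.apply_symm_apply i
      simp only [hg, LinearMap.comp_apply, LinearEquiv.coe_coe, h1]
      rw [Submodule.coe_subtype, h2, h3]
    have : LinearMap.toMatrix snf.bM snf.bM g = Matrix.diagonal (fun i => snf.a (σ.symm i)) := by
      ext i j
      rw [LinearMap.toMatrix_apply, hgb, LinearEquiv.map_smul, Module.Basis.repr_self,
        Finsupp.smul_single, smul_eq_mul, mul_one]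
      by_cases h : i = j
      · rw [h, Matrix.diagonal_apply_eq, Finsupp.single_eq_same]
      · rw [Matrix.diagonal_apply_ne _ h, Finsupp.single_eq_of_ne h]
    rw [← LinearMap.det_toMatrix snf.bM, this, Matrix.det_diagonal]
    exact Equiv.prod_comp σ.symm (fun i => snf.a i)
  have hassoc := LinearMap.associated_det_comp_equiv
    ((N.subtype).restrictScalars ℤ) e1 e2
  have : M.det.natAbs = (∏ i, snf.a i).natAbs := by
    rw [← hdet1, ← hdet2]
    exact Int.natAbs_eq_iff_associated.mpr hassoc
  rw [hidx, this]
  exact (map_prod Int.natAbsHom _ _).symm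

/-- Let `A, B` be `d×d` integer matrices acting on `ℤ^d`, simultaneously
triangularisable over `ℂ` by an invertible matrix `P` with diagonal entries
`ξᵢ` and `ηᵢ` respectively. Then for every `n ≥ 1` with `ξᵢⁿ ≠ ηᵢⁿ` for all `i`,
the coincidence Reidemeister number of `(φⁿ, ψⁿ)` equals `∏ᵢ |ξᵢⁿ - ηᵢⁿ|`, a
positive integer equal to `|det(Aⁿ - Bⁿ)|`. -/
theorem coincidence_reidemeister_number_triangularizable (d : ℕ)
    (A B : Matrix (Fin d) (Fin d) ℤ) (P : Matrix (Fin d) (Fin d) ℂ) (hP : IsUnit P)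
    (ξ η : Fin d → ℂ)
    (hA : (P⁻¹ * A.map (Int.cast : ℤ → ℂ) * P).BlockTriangular (id : Fin d → Fin d))
    (hB : (P⁻¹ * B.map (Int.cast : ℤ → ℂ) * P).BlockTriangular (id : Fin d → Fin d))
    (hξ : ∀ i, (P⁻¹ * A.map (Int.cast : ℤ → ℂ) * P) i i = ξ i)
    (hη : ∀ i, (P⁻¹ * B.map (Int.cast : ℤ → ℂ) * P) i i = η i) :
    ∀ n : ℕ, 1 ≤ n → (∀ i, ξ i ^ n ≠ η i ^ n) →
      (Nat.card (Quot (fun x y : Fin d → ℤ =>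
          ∃ g : Fin d → ℤ, y = x + (B ^ n).mulVec g - (A ^ n).mulVec g)) : ℝ) =
        ∏ i : Fin d, ‖ξ i ^ n - η i ^ n‖ ∧
      Nat.card (Quot (fun x y : Fin d → ℤ =>
          ∃ g : Fin d → ℤ, y = x + (B ^ n).mulVec g - (A ^ n).mulVec g)) =
        ((A ^ n - B ^ n).det).natAbs := by
  intro n hn hne
  have hmapA : ∀ M : Matrix (Fin d) (Fin d) ℤ,
      M.map (Int.cast : ℤ → ℂ) = (Int.castRingHom ℂ).mapMatrix M := fun _ => rfl
  -- the key determinant identity over ℂ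
  have key : (((A ^ n - B ^ n).det : ℤ) : ℂ) = ∏ i, (ξ i ^ n - η i ^ n) := by
    have hmap : (A ^ n - B ^ n).map (Int.cast : ℤ → ℂ) =
        (A.map (Int.cast : ℤ → ℂ)) ^ n - (B.map (Int.cast : ℤ → ℂ)) ^ n := by
      simp only [hmapA, map_sub, map_pow]
    have h1 : (((A ^ n - B ^ n).det : ℤ) : ℂ) = ((A ^ n - B ^ n).map (Int.cast : ℤ → ℂ)).det := by
      rw [hmapA]; exact RingHom.map_det (Int.castRingHom ℂ) _
    rw [h1, hmap, ← Matrix.det_conj' hP]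
    have h2 : P⁻¹ * ((A.map (Int.cast : ℤ → ℂ)) ^ n - (B.map (Int.cast : ℤ → ℂ)) ^ n) * P =
        (P⁻¹ * A.map (Int.cast : ℤ → ℂ) * P) ^ n - (P⁻¹ * B.map (Int.cast : ℤ → ℂ) * P) ^ n := by
      rw [aux_conj_pow _ _ hP, aux_conj_pow _ _ hP, Matrix.mul_sub, Matrix.sub_mul]
    rw [h2]
    have hTA := aux_tri_pow _ hA n
    have hTB := aux_tri_pow _ hB n
    rw [Matrix.det_of_upperTriangular (hTA.1.sub hTB.1)]
    refine Finset.prod_congr rfl fun i _ => ?_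
    rw [Matrix.sub_apply, hTA.2 i, hTB.2 i, hξ i, hη i]
  have hprodne : (∏ i, (ξ i ^ n - η i ^ n)) ≠ 0 :=
    Finset.prod_ne_zero_iff.mpr fun i _ => sub_ne_zero.mpr (hne i)
  have hdet0 : (A ^ n - B ^ n).det ≠ 0 := by
    intro h
    rw [h] at key
    exact hprodne (by exact_mod_cast key.symm)
  have hdet0' : (B ^ n - A ^ n).det ≠ 0 := by
    rw [← neg_sub (A ^ n) (B ^ n), Matrix.det_neg]
    simp only [ne_eq, mul_eq_zero, not_or]
    exact ⟨pow_ne_zero _ (by norm_num), hdet0⟩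
  have hnatAbs : (B ^ n - A ^ n).det.natAbs = (A ^ n - B ^ n).det.natAbs := by
    rw [← neg_sub (A ^ n) (B ^ n), Matrix.det_neg, Int.natAbs_mul, Int.natAbs_pow]
    simp
  set H : AddSubgroup (Fin d → ℤ) :=
    (LinearMap.range (Matrix.toLin' (B ^ n - A ^ n))).toAddSubgroup with hH
  have e : Quot (fun x y : Fin d → ℤ =>
      ∃ g : Fin d → ℤ, y = x + (B ^ n).mulVec g - (A ^ n).mulVec g) ≃ ((Fin d → ℤ) ⧸ H) := by
    refine Quot.congrRight fun x y => ?_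
    refine Iff.trans ?_ QuotientAddGroup.leftRel_apply.symm
    constructor
    · rintro ⟨g, rfl⟩
      refine ⟨g, ?_⟩
      rw [Matrix.toLin'_apply, Matrix.sub_mulVec]
      abel
    · rintro ⟨g, hg⟩
      refine ⟨g, ?_⟩
      rw [Matrix.toLin'_apply, Matrix.sub_mulVec] at hg
      have : y = x + (-x + y) := by abel
      rw [this, ← hg]
      abel
  have hcard : Nat.card (Quot (fun x y : Fin d → ℤ =>
      ∃ g : Fin d → ℤ, y = x + (B ^ n).mulVec g - (A ^ n).mulVec g)) =
      (A ^ n - B ^ n).det.natAbs := by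
    rw [Nat.card_congr e, ← hnatAbs, ← aux_card_cokernel _ hdet0']
    rfl
  refine ⟨?_, hcard⟩
  rw [hcard]
  have h2 : ‖(((A ^ n - B ^ n).det : ℤ) : ℂ)‖ =
      ∏ i, ‖ξ i ^ n - η i ^ n‖ := by
    rw [key, norm_prod]
  rw [← h2, Complex.norm_intCast, Nat.cast_natAbs]
  exact Int.cast_abs
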